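/- Let k > 0, a ∈ ℝ, σ > 0, λ ∈ (1/2, 1), and let B : [0,∞) → ℝ satisfy B(0) = 0 and be λ-Hölder continuous on every compact interval [0,T] (i.e. for every T > 0 there is C with |B(t) − B(s)| ≤ C·|t − s|^λ for all 0 ≤ s ≤ t ≤ T). Let Y : [0,∞) → ℝ be continuous with Y(0) > 0, and suppose that for every t ≥ 0 with inf_{s∈[0,t]} Y(s) > 0 one has Y(t) = Y(0) + (1/2)∫₀ᵗ (k/Y(s) − a·Y(s)) ds + (σ/2)·B(t). Then Y(t) > 0 for all t ≥ 0; that is, Y never hits zero. -/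

import Mathlib

/-- pathwise strict positivity of the fractional CIR-type process:
if `k > 0`, `σ > 0`, the driving path `B` is locally `λ`-Hölder with `λ ∈ (1/2, 1)`,
`B 0 = 0`, `Y` is continuous on `[0,∞)` with `Y 0 > 0`, and `Y` satisfies the integral
equation `Y t = Y 0 + (1/2)∫₀ᵗ (k/Y(s) − a Y(s)) ds + (σ/2) B t` for every `t ≥ 0`
such that `inf_{s ∈ [0,t]} Y s > 0`, then `Y` is strictly positive on `[0,∞)`. -/
theorem fCIR_never_hits_zero_pathwise (k a σ l : ℝ) (hk : 0 < k) (hσ : 0 < σ)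
    (hl : 1 / 2 < l) (hl1 : l < 1)
    (B : ℝ → ℝ) (hB0 : B 0 = 0)
    (hBHolder : ∀ T : ℝ, 0 < T → ∃ C : ℝ, ∀ s t : ℝ, 0 ≤ s → s ≤ t → t ≤ T →
      |B t - B s| ≤ C * (t - s) ^ l)
    (Y : ℝ → ℝ) (hYcont : ContinuousOn Y (Set.Ici 0)) (hY0 : 0 < Y 0)
    (hY : ∀ t : ℝ, 0 ≤ t → 0 < sInf (Y '' Set.Icc 0 t) →
      Y t = Y 0 + (1 / 2) * (∫ s in (0:ℝ)..t, (k / Y s - a * Y s)) + (σ / 2) * B t) :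
    ∀ t : ℝ, 0 ≤ t → 0 < Y t := by
  have hl0 : (0:ℝ) ≤ l := by linarith
  by_contra hcon
  push_neg at hcon
  obtain ⟨t₁, ht₁0, ht₁⟩ := hcon
  set S : Set ℝ := {t | 0 ≤ t ∧ Y t ≤ 0} with hSdef
  have hSne : S.Nonempty := ⟨t₁, ht₁0, ht₁⟩
  have hSbdd : BddBelow S := ⟨0, fun t ht => ht.1⟩
  have hSclosed : IsClosed S := by
    have hset : S = Set.Ici 0 ∩ Y ⁻¹' Set.Iic 0 := by
      ext t
      simp only [hSdef, Set.mem_setOf_eq, Set.mem_inter_iff, Set.mem_Ici, Set.mem_preimage,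
        Set.mem_Iic]
    rw [hset]
    exact hYcont.preimage_isClosed_of_isClosed isClosed_Ici isClosed_Iic
  set T := sInf S with hTdef
  have hTS : T ∈ S := hSclosed.csInf_mem hSne hSbdd
  have hTle : ∀ t : ℝ, 0 ≤ t → Y t ≤ 0 → T ≤ t :=
    fun t ht1 ht2 => csInf_le hSbdd ⟨ht1, ht2⟩
  have hT0 : 0 ≤ T := hTS.1
  have hYT0 : Y T ≤ 0 := hTS.2
  clear hTS
  clear_value S T
  -- Y T = 0
  have hYT : Y T = 0 := by
    have hsub : Set.Icc (0:ℝ) T ⊆ Set.Ici 0 := fun x hx => hx.1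
    obtain ⟨c, hc, hYc⟩ := intermediate_value_Icc' hT0 (hYcont.mono hsub)
      (Set.mem_Icc.2 ⟨hYT0, hY0.le⟩)
    have h1 : T ≤ c := hTle c hc.1 hYc.le
    have h2 : c = T := le_antisymm hc.2 h1
    rw [← h2]; exact hYc
  have hTpos : 0 < T := by
    rcases hT0.lt_or_eq with h | h
    · exact h
    · exfalso; rw [← h] at hYT; linarith
  have hYpos : ∀ t, 0 ≤ t → t < T → 0 < Y t := by
    intro t ht htT
    by_contra h
    push_neg at h
    exact absurd (hTle t ht h) (not_le.2 htT)
  -- the infimum hypothesis holds strictly before T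
  have heq : ∀ t, 0 ≤ t → t < T →
      Y t = Y 0 + (1 / 2) * (∫ s in (0:ℝ)..t, (k / Y s - a * Y s)) + (σ / 2) * B t := by
    intro t ht htT
    apply hY t ht
    have hsub : Set.Icc (0:ℝ) t ⊆ Set.Ici 0 := fun x hx => hx.1
    have hcomp : IsCompact (Y '' Set.Icc 0 t) :=
      (isCompact_Icc).image_of_continuousOn (hYcont.mono hsub)
    have hne : (Y '' Set.Icc 0 t).Nonempty := ⟨Y 0, 0, ⟨le_refl 0, ht⟩, rfl⟩
    obtain ⟨x, hx, hxeq⟩ := hcomp.sInf_mem hne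
    rw [← hxeq]
    exact hYpos x hx.1 (lt_of_le_of_lt hx.2 htT)
  -- integrability of the pieces
  have hYposIcc : ∀ u v : ℝ, 0 ≤ u → v < T → ∀ x ∈ Set.Icc u v, 0 < Y x :=
    fun u v hu hv x hx => hYpos x (hu.trans hx.1) (lt_of_le_of_lt hx.2 hv)
  have hYcont' : ∀ u v : ℝ, 0 ≤ u → ContinuousOn Y (Set.Icc u v) :=
    fun u v hu => hYcont.mono (fun x hx => hu.trans hx.1)
  have hint1 : ∀ u v : ℝ, 0 ≤ u → u ≤ v → v < T →
      IntervalIntegrable (fun s => k / Y s) MeasureTheory.volume u v := by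
    intro u v hu huv hvT
    apply ContinuousOn.intervalIntegrable
    rw [Set.uIcc_of_le huv]
    exact continuousOn_const.div (hYcont' u v hu)
      (fun x hx => (hYposIcc u v hu hvT x hx).ne')
  have hint2 : ∀ u v : ℝ, 0 ≤ u → u ≤ v →
      IntervalIntegrable (fun s => a * Y s) MeasureTheory.volume u v := by
    intro u v hu huv
    apply ContinuousOn.intervalIntegrable
    rw [Set.uIcc_of_le huv]
    exact continuousOn_const.mul (hYcont' u v hu)
  have hfint : ∀ u v : ℝ, 0 ≤ u → u ≤ v → v < T →
      IntervalIntegrable (fun s => k / Y s - a * Y s) MeasureTheory.volume u v :=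
    fun u v hu huv hvT => (hint1 u v hu huv hvT).sub (hint2 u v hu huv)
  -- difference form of the equation
  have hdiff : ∀ u v : ℝ, 0 ≤ u → u ≤ v → v < T →
      (1/2) * (∫ s in u..v, (k / Y s - a * Y s)) = Y v - Y u - (σ/2) * (B v - B u) := by
    intro u v hu huv hvT
    have h1 := heq u hu (lt_of_le_of_lt huv hvT)
    have h2 := heq v (hu.trans huv) hvT
    have hadd := intervalIntegral.integral_add_adjacent_intervals
      (hfint 0 u le_rfl hu (lt_of_le_of_lt huv hvT)) (hfint u v hu huv hvT)
    rw [h1, h2]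
    linarith [hadd]
  -- Hölder constant
  obtain ⟨C, hC⟩ := hBHolder T hTpos
  set C₀ := |C| with hC₀def
  have hC₀nn : 0 ≤ C₀ := abs_nonneg C
  have hC₀ : ∀ s t : ℝ, 0 ≤ s → s ≤ t → t ≤ T → |B t - B s| ≤ C₀ * (t - s) ^ l := by
    intro s t hs hst htT
    refine (hC s t hs hst htT).trans ?_
    exact mul_le_mul_of_nonneg_right (le_abs_self C) (Real.rpow_nonneg (by linarith) l)
  set K := σ * C₀ with hKdef
  have hKnn : 0 ≤ K := mul_nonneg hσ.le hC₀nn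
  clear_value C₀ K
  -- the key quantitative estimate
  have key : ∀ δ : ℝ, 0 < δ → δ ≤ T → |a| * δ ≤ 1 →
      k * δ ≤ 4 * K * K * (δ ^ l * δ ^ l) := by
    intro δ hδ0 hδT haδ
    set u := T - δ with hudef
    have hu0 : 0 ≤ u := by simp [hudef]; linarith
    have huT : u < T := by simp [hudef]; linarith
    -- the maximum of Y on [u, T]
    have hsub : Set.Icc u T ⊆ Set.Ici 0 := fun x hx => hu0.trans hx.1
    have hcomp : IsCompact (Y '' Set.Icc u T) :=
      (isCompact_Icc).image_of_continuousOn (hYcont.mono hsub)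
    have hne : (Y '' Set.Icc u T).Nonempty := ⟨Y u, u, ⟨le_refl u, huT.le⟩, rfl⟩
    set M := sSup (Y '' Set.Icc u T) with hMdef
    have hMbdd : BddAbove (Y '' Set.Icc u T) := hcomp.bddAbove
    have hYleM : ∀ x ∈ Set.Icc u T, Y x ≤ M := fun x hx => le_csSup hMbdd ⟨x, hx, rfl⟩
    have hMpos : 0 < M := lt_of_lt_of_le (hYpos u hu0 huT) (hYleM u ⟨le_refl u, huT.le⟩)
    obtain ⟨ts, hts, htseq⟩ := hcomp.sSup_mem hne
    rw [← hMdef] at htseq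
    clear_value M
    -- ts realizes the max, ts < T
    have htsT : ts < T := by
      rcases lt_or_eq_of_le hts.2 with h | h
      · exact h
      · exfalso; rw [h, hYT] at htseq; rw [← htseq] at hMpos; exact lt_irrefl 0 hMpos
    have hts0 : 0 ≤ ts := hu0.trans hts.1
    -- rpow facts
    have hδl_nn : (0:ℝ) ≤ δ ^ l := Real.rpow_nonneg hδ0.le l
    -- the epsilon estimates
    have hAB : ∀ ε : ℝ, 0 < ε →
        M ≤ ε + |a| * M * δ / 2 + K * δ ^ l / 2 ∧
        k * δ / (2 * M) ≤ 2 * ε + K * δ ^ l + |a| * M * δ := by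
      intro ε hε
      -- find t' close to T with Y t' < ε
      have hcontT : ContinuousAt Y T := hYcont.continuousAt (Ici_mem_nhds hTpos)
      obtain ⟨η, hη, hηprop⟩ := Metric.continuousAt_iff.mp hcontT ε hε
      set b := max ts (max (T - δ/2) (T - η/2)) with hbdef
      have hbT : b < T := by
        simp only [hbdef, max_lt_iff]
        exact ⟨htsT, by linarith, by linarith⟩
      set t' := (b + T) / 2 with ht'def
      have hbt' : b < t' := by simp [ht'def]; linarith
      have ht'T : t' < T := by simp [ht'def]; linarith
      have hts_t' : ts ≤ t' := le_trans (le_max_left _ _) hbt'.le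
      have ht'1 : T - δ/2 ≤ t' := le_trans (le_trans (le_max_left _ _) (le_max_right _ _)) hbt'.le
      have ht'2 : T - η/2 ≤ t' := le_trans (le_trans (le_max_right _ _) (le_max_right _ _)) hbt'.le
      have hut' : u ≤ t' := by simp only [hudef]; linarith
      have ht'0 : 0 ≤ t' := hu0.trans hut'
      have ht'Icc : t' ∈ Set.Icc u T := ⟨hut', ht'T.le⟩
      -- Y t' < ε
      have hYt'ε : Y t' < ε := by
        have hd : dist t' T < η := by
          rw [Real.dist_eq, abs_of_nonpos (by linarith)]
          linarith
        have := hηprop hd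
        rw [Real.dist_eq, hYT, sub_zero] at this
        exact lt_of_le_of_lt (le_abs_self _) this
      have hYt'pos : 0 < Y t' := hYpos t' ht'0 ht'T
      -- bound on |B v - B w| for u ≤ w ≤ v ≤ T within the δ-window
      have hBbd : ∀ w v : ℝ, u ≤ w → w ≤ v → v ≤ T → |B v - B w| ≤ C₀ * δ ^ l := by
        intro w v hw hwv hvT
        refine (hC₀ w v (hu0.trans hw) hwv hvT).trans ?_
        apply mul_le_mul_of_nonneg_left _ hC₀nn
        apply Real.rpow_le_rpow (by linarith) _ hl0
        simp only [hudef] at hw; linarith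
      -- Y is nonnegative on [u,T]
      have hYnnIcc : ∀ x ∈ Set.Icc u T, 0 ≤ Y x := by
        intro x hx
        rcases lt_or_eq_of_le hx.2 with h | h
        · exact (hYpos x (hu0.trans hx.1) h).le
        · rw [h, hYT]
      -- bound on ∫ a*Y over subintervals of [u,T]
      have haYbd : ∀ w v : ℝ, u ≤ w → w ≤ v → v ≤ T →
          |∫ s in w..v, a * Y s| ≤ |a| * M * δ := by
        intro w v hw hwv hvT
        have h1 : |∫ s in w..v, a * Y s| ≤ (|a| * M) * |v - w| := by
          rw [← Real.norm_eq_abs (∫ s in w..v, a * Y s)]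
          apply intervalIntegral.norm_integral_le_of_norm_le_const
          intro x hx
          rw [Set.uIoc_of_le hwv] at hx
          have hxIcc : x ∈ Set.Icc u T := ⟨hw.trans hx.1.le, hx.2.trans hvT⟩
          rw [Real.norm_eq_abs, abs_mul, abs_of_nonneg (hYnnIcc x hxIcc)]
          exact mul_le_mul_of_nonneg_left (hYleM x hxIcc) (abs_nonneg a)
        refine h1.trans ?_
        rw [abs_of_nonneg (show (0:ℝ) ≤ v - w by linarith)]
        apply mul_le_mul_of_nonneg_left _ (mul_nonneg (abs_nonneg a) hMpos.le)
        simp only [hudef] at hw; linarith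
      -- part A : M ≤ ε + |a| M δ / 2 + K δ^l / 2
      constructor
      · -- use the equation between ts and t'
        have hd := hdiff ts t' hts0 hts_t' ht'T
        have hsplit : (∫ s in ts..t', (k / Y s - a * Y s))
            = (∫ s in ts..t', k / Y s) - ∫ s in ts..t', a * Y s :=
          intervalIntegral.integral_sub (hint1 ts t' hts0 hts_t' ht'T)
            (hint2 ts t' hts0 hts_t')
        have hnn : 0 ≤ ∫ s in ts..t', k / Y s := by
          apply intervalIntegral.integral_nonneg hts_t'
          intro x hx
          have hYx : 0 < Y x := hYpos x (hts0.trans hx.1) (lt_of_le_of_lt hx.2 ht'T)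
          positivity
        have haY := haYbd ts t' hts.1 hts_t' ht'T.le
        have hB := hBbd ts t' hts.1 hts_t' ht'T.le
        rw [abs_le] at haY hB
        have hBσ : -(σ/2) * (B t' - B ts) ≤ (σ/2) * (C₀ * δ ^ l) := by
          have h := mul_nonneg hσ.le
            (show (0:ℝ) ≤ C₀ * δ ^ l + (B t' - B ts) by linarith [hB.1])
          linarith [h]
        rw [hsplit] at hd
        have hKδ : (σ/2) * (C₀ * δ ^ l) = K * δ ^ l / 2 := by
          rw [hKdef]; ring
        rw [htseq] at hd
        linarith [hd, hnn, haY.2, hYt'ε, hBσ, hKδ]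
      · -- part B : lower bound on the singular integral
        have hd := hdiff u t' hu0 hut' ht'T
        have hsplit : (∫ s in u..t', (k / Y s - a * Y s))
            = (∫ s in u..t', k / Y s) - ∫ s in u..t', a * Y s :=
          intervalIntegral.integral_sub (hint1 u t' hu0 hut' ht'T)
            (hint2 u t' hu0 hut')
        -- lower bound ∫ k/Y ≥ (t' - u) * (k / M)
        have hlow : (t' - u) * (k / M) ≤ ∫ s in u..t', k / Y s := by
          have hconst : (∫ s in u..t', (k / M : ℝ)) = (t' - u) * (k / M) := by
            rw [intervalIntegral.integral_const, smul_eq_mul]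
          rw [← hconst]
          apply intervalIntegral.integral_mono_on hut'
            (intervalIntegrable_const) (hint1 u t' hu0 hut' ht'T)
          intro x hx
          have hYx : 0 < Y x := hYpos x (hu0.trans hx.1) (lt_of_le_of_lt hx.2 ht'T)
          have hYxM : Y x ≤ M := hYleM x ⟨hx.1, hx.2.trans ht'T.le⟩
          rw [div_le_div_iff₀ hMpos hYx]
          exact mul_le_mul_of_nonneg_left hYxM hk.le
        have haY := haYbd u t' le_rfl hut' ht'T.le
        have hB := hBbd u t' le_rfl hut' ht'T.le
        rw [abs_le] at haY hB
        have hYu : 0 < Y u := hYpos u hu0 huT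
        -- from hd : (1/2) ∫ k/Y = Y t' - Y u - (σ/2)(B t' - B u) + (1/2) ∫ aY
        have hub : (∫ s in u..t', k / Y s) ≤ 2*ε + K * δ ^ l + |a| * M * δ := by
          rw [hsplit] at hd
          have hBσ : -(σ/2) * (B t' - B u) ≤ (σ/2) * (C₀ * δ ^ l) := by
            have h := mul_nonneg hσ.le
              (show (0:ℝ) ≤ C₀ * δ ^ l + (B t' - B u) by linarith [hB.1])
            linarith [h]
          have hKδ : (σ/2) * (C₀ * δ ^ l) = K * δ ^ l / 2 := by
            rw [hKdef]; ring
          linarith [hd, haY.2, hYt'ε, hBσ, hKδ, hYu]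
        have hlow2 : k * δ / (2 * M) ≤ (t' - u) * (k / M) := by
          have ht'u : δ / 2 ≤ t' - u := by simp only [hudef]; linarith
          have hM0 : M ≠ 0 := hMpos.ne'
          have heq2 : k * δ / (2 * M) = (δ/2) * (k/M) := by field_simp
          rw [heq2]
          exact mul_le_mul_of_nonneg_right ht'u (by positivity)
        exact hlow2.trans (hlow.trans hub)
    -- combine the two estimates
    have hA : M ≤ |a| * M * δ / 2 + K * δ ^ l / 2 := by
      apply le_of_forall_pos_le_add
      intro ε hε
      have := (hAB ε hε).1
      linarith
    have hMK : M ≤ K * δ ^ l := by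
      have h := mul_le_mul_of_nonneg_right haδ hMpos.le
      linarith [h, hA]
    have hB' : k * δ / (2 * M) ≤ 2 * (K * δ ^ l) := by
      have h1 : k * δ / (2 * M) ≤ K * δ ^ l + |a| * M * δ := by
        apply le_of_forall_pos_le_add
        intro ε hε
        have := (hAB (ε/2) (by linarith)).2
        linarith
      have h := mul_le_mul_of_nonneg_right haδ hMpos.le
      linarith [h, hMK, h1]
    have h2 : k * δ ≤ 2 * (K * δ ^ l) * (2 * M) := by
      have h3 := mul_le_mul_of_nonneg_right hB' (by positivity : (0:ℝ) ≤ 2 * M)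
      rwa [div_mul_cancel₀ _ (by positivity : (2:ℝ) * M ≠ 0)] at h3
    have h4 := mul_le_mul_of_nonneg_left hMK
      (show (0:ℝ) ≤ 4 * (K * δ ^ l) by positivity)
    linarith [h2, h4]
  -- final contradiction: take δ → 0
  have h2l : (0:ℝ) < 2 * l - 1 := by linarith
  by_cases hK0 : K = 0
  · -- then k * δ ≤ 0 for a suitable δ > 0, contradiction
    set δ := min T (1 / (|a| + 1)) with hδdef
    have hane : (0:ℝ) < |a| + 1 := by positivity
    have hδ0 : 0 < δ := lt_min hTpos (by positivity)
    have hδT : δ ≤ T := min_le_left _ _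
    have haδ : |a| * δ ≤ 1 := by
      have h1 : δ ≤ 1 / (|a| + 1) := min_le_right _ _
      have h2 : |a| * δ ≤ |a| * (1 / (|a| + 1)) :=
        mul_le_mul_of_nonneg_left h1 (abs_nonneg a)
      have h3 : |a| * (1 / (|a| + 1)) ≤ 1 := by
        rw [mul_one_div, div_le_one hane]
        linarith [abs_nonneg a]
      linarith
    have hthis := key δ hδ0 hδT haδ
    rw [hK0] at hthis
    linarith [mul_pos hk hδ0, hthis]
  · have hKpos : 0 < K := lt_of_le_of_ne hKnn (Ne.symm hK0)
    have hc : (0:ℝ) < k / (4 * K * K) := by positivity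
    set x₀ := (k / (4 * K * K)) ^ ((2 * l - 1)⁻¹) with hx₀def
    have hx₀pos : 0 < x₀ := Real.rpow_pos_of_pos hc _
    have hx₀pow : x₀ ^ (2 * l - 1) = k / (4 * K * K) := by
      rw [hx₀def, ← Real.rpow_mul hc.le, inv_mul_cancel₀ h2l.ne', Real.rpow_one]
    set δ := min (min T (1 / (|a| + 1))) (x₀ / 2) with hδdef
    have hane : (0:ℝ) < |a| + 1 := by positivity
    have hδ0 : 0 < δ := lt_min (lt_min hTpos (by positivity)) (by positivity)
    have hδT : δ ≤ T := le_trans (min_le_left _ _) (min_le_left _ _)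
    have haδ : |a| * δ ≤ 1 := by
      have h1 : δ ≤ 1 / (|a| + 1) := le_trans (min_le_left _ _) (min_le_right _ _)
      have h2 : |a| * δ ≤ |a| * (1 / (|a| + 1)) :=
        mul_le_mul_of_nonneg_left h1 (abs_nonneg a)
      have h3 : |a| * (1 / (|a| + 1)) ≤ 1 := by
        rw [mul_one_div, div_le_one hane]
        linarith [abs_nonneg a]
      linarith
    have hkey := key δ hδ0 hδT haδ
    have hδx₀ : δ < x₀ := lt_of_le_of_lt (min_le_right _ _) (by linarith)
    have hδpow : δ ^ (2 * l - 1) < k / (4 * K * K) := by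
      rw [← hx₀pow]
      exact Real.rpow_lt_rpow hδ0.le hδx₀ h2l
    have hsplit : δ ^ l * δ ^ l = δ ^ (2 * l - 1) * δ := by
      rw [← Real.rpow_add hδ0 l l]
      have h1 : l + l = (2 * l - 1) + 1 := by ring
      rw [h1, Real.rpow_add hδ0, Real.rpow_one]
    rw [hsplit] at hkey
    have h5 := mul_lt_mul_of_pos_left hδpow
      (show (0:ℝ) < 4 * K * K * δ by positivity)
    have h6 : 4 * K * K * δ * (k / (4 * K * K)) = k * δ := by
      field_simp
    linarith [hkey, h5, h6]
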